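/- Let G be a connected finite simple graph with ℓ = p(G) ≥ 2 pendant biconnected components, let P₁, …, P_ℓ be the pendant biconnected components of G, and let v₁, …, v_ℓ be pairwise nonadjacent vertices with v_i ∈ V(P_i) for each i. Let H be a connected finite simple graph with 2 ≤ |V(H)| ≤ ℓ and ℓ − |V(H)| ≠ 1. Then there exists an injective map φ : V(H) → {v₁, …, v_ℓ} such that the set of pendant biconnected components of the superposition F = G ⊕_φ H is exactly {P_i : v_i ∉ φ(V(H))}. -/

import Mathlib

open SimpleGraph

/-- The superposition `G ⊕_φ H` of `G` and `H` with respect to an injective map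
`φ : V(H) ↪ V(G)`. -/
def superpose {α β : Type*} (G : SimpleGraph α) (H : SimpleGraph β) (φ : β ↪ α) :
    SimpleGraph α :=
  G ⊔ SimpleGraph.map φ H

/-- The graph obtained from `G` by deleting all its bridges; its connected
components are the biconnected components of `G`. -/
def bicompGraph {α : Type*} (G : SimpleGraph α) : SimpleGraph α :=
  G.deleteEdges {e | G.IsBridge e}

/-- A biconnected component `C` of `G` is pendant if exactly one bridge of `G` has an
endpoint in `C`. -/
def IsPendant {α : Type*} (G : SimpleGraph α)
    (C : (bicompGraph G).ConnectedComponent) : Prop :=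
  ∃! e : Sym2 α, G.IsBridge e ∧ ∃ v ∈ C.supp, v ∈ e

namespace Helper

variable {V : Type*} {Γ : SimpleGraph V}

lemma closed_under_walk {s : Set V} (hcl : ∀ x y, x ∈ s → Γ.Adj x y → y ∈ s)
    {x u : V} (p : Γ.Walk x u) (hx : x ∈ s) : u ∈ s := by
  induction p with
  | nil => exact hx
  | @cons x y u h _ ih => exact ih (hcl x y hx h)

lemma not_reach_of_isBridge {a b : V} (h : Γ.IsBridge s(a, b)) :
    ¬ (Γ.deleteEdges {s(a, b)}).Reachable a b := isBridge_iff.mp h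

lemma bridge_adj {a b : V} (hr : Γ.Reachable a b) (h : Γ.IsBridge s(a, b)) : Γ.Adj a b :=
  h.reachable_iff_adj.mp hr

lemma exists_boundary {s : Set V} {x u : V} (p : Γ.Walk x u) (hx : x ∈ s) (hu : u ∉ s) :
    ∃ c d, Γ.Adj c d ∧ c ∈ s ∧ d ∉ s := by
  induction p with
  | nil => exact absurd hx hu
  | @cons x y u h q ih =>
    by_cases hy : y ∈ s
    · exact ih hy hu
    · exact ⟨x, y, h, hx, hy⟩

lemma mem_supp_reach {C : Γ.ConnectedComponent} {x y : V}
    (hx : x ∈ C.supp) (hy : y ∈ C.supp) : Γ.Reachable x y := by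
  rw [ConnectedComponent.mem_supp_iff] at hx hy
  exact ConnectedComponent.eq.mp (hx.trans hy.symm)

lemma mem_supp_mk_iff {x u : V} :
    u ∈ (Γ.connectedComponentMk x).supp ↔ Γ.Reachable x u := by
  rw [ConnectedComponent.mem_supp_iff, ConnectedComponent.eq, reachable_comm]

lemma side_step {e : Sym2 V} {a b x u : V} (he : e = s(a, b)) (p : Γ.Walk x u)
    (hx : (Γ.deleteEdges {e}).Reachable a x ∨ (Γ.deleteEdges {e}).Reachable b x) :
    (Γ.deleteEdges {e}).Reachable a u ∨ (Γ.deleteEdges {e}).Reachable b u := by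
  induction p with
  | nil => exact hx
  | @cons x y u h q ih =>
    apply ih
    by_cases hxy : s(x, y) = e
    · rw [he, Sym2.eq_iff] at hxy
      rcases hxy with ⟨rfl, rfl⟩ | ⟨rfl, rfl⟩
      · exact Or.inr (Reachable.refl _)
      · exact Or.inl (Reachable.refl _)
    · have hadj : (Γ.deleteEdges {e}).Adj x y := by
        simp only [deleteEdges_adj, Set.mem_singleton_iff]
        exact ⟨h, hxy⟩
      rcases hx with hx | hx
      · exact Or.inl (hx.trans hadj.reachable)
      · exact Or.inr (hx.trans hadj.reachable)

/-- Totality of sides. -/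
lemma side_total (hc : Γ.Connected) {a b : V} (u : V) :
    (Γ.deleteEdges {s(a, b)}).Reachable a u ∨ (Γ.deleteEdges {s(a, b)}).Reachable b u := by
  obtain ⟨p⟩ := hc.preconnected a u
  exact side_step rfl p (Or.inl (Reachable.refl _))

/-- The only edge crossing the cut of a bridge is the bridge itself. -/
lemma crossing_eq {a b u w : V} (hbr : Γ.IsBridge s(a, b)) (huw : Γ.Adj u w)
    (hu : (Γ.deleteEdges {s(a, b)}).Reachable a u)
    (hw : (Γ.deleteEdges {s(a, b)}).Reachable b w) : s(u, w) = s(a, b) := by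
  by_contra hne
  have hadj : (Γ.deleteEdges {s(a, b)}).Adj u w := by
    simp only [deleteEdges_adj, Set.mem_singleton_iff]
    exact ⟨huw, hne⟩
  exact not_reach_of_isBridge hbr (hu.trans (hadj.reachable.trans hw.symm))

lemma surgery_aux : ∀ n : ℕ, ∀ {u v : V} (p : Γ.Walk u v), p.length ≤ n →
    (∀ e, Γ.IsBridge e → (Γ.deleteEdges {e}).Reachable u v) →
    (Γ.deleteEdges {e | Γ.IsBridge e}).Reachable u v := by
  classical
  intro n
  induction n with
  | zero =>
    intro u v p hp _
    cases p with
    | nil => exact Reachable.refl _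
    | cons _ _ => simp at hp
  | succ n ih =>
    intro u v p hp h
    cases p with
    | nil => exact Reachable.refl _
    | @cons u x v hadj q =>
      simp only [SimpleGraph.Walk.length_cons, Nat.add_le_add_iff_right] at hp
      by_cases hb : Γ.IsBridge s(u, x)
      · have hq : s(u, x) ∈ q.edges := by
          by_contra hne
          have hxv : (Γ.deleteEdges {s(u, x)}).Reachable x v :=
            ⟨q.toDeleteEdges _ (fun e hee => by
              simp only [Set.mem_singleton_iff]
              rintro rfl; exact hne hee)⟩
          exact not_reach_of_isBridge hb ((h _ hb).trans hxv.symm)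
        have hu : u ∈ q.support := q.fst_mem_support_of_mem_edges hq
        exact ih (q.dropUntil u hu) (le_trans (q.length_dropUntil_le hu) hp) h
      · have hstep : (Γ.deleteEdges {e | Γ.IsBridge e}).Adj u x := by
          simp only [deleteEdges_adj, Set.mem_setOf_eq]
          exact ⟨hadj, hb⟩
        have hxv := ih q hp (fun e he => by
          have hne : s(u, x) ≠ e := fun hh => hb (hh ▸ he)
          have huxe : (Γ.deleteEdges {e}).Adj u x := by
            simp only [deleteEdges_adj, Set.mem_singleton_iff]
            exact ⟨hadj, hne⟩
          exact huxe.reachable.symm.trans (h e he))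
        exact hstep.reachable.trans hxv

/-- A pair of vertices not separated by any bridge lies in one biconnected component. -/
lemma reachable_deleteEdges_bridges {u v : V} (hr : Γ.Reachable u v)
    (h : ∀ e, Γ.IsBridge e → (Γ.deleteEdges {e}).Reachable u v) :
    (Γ.deleteEdges {e | Γ.IsBridge e}).Reachable u v := by
  obtain ⟨p⟩ := hr
  exact surgery_aux p.length p le_rfl h

lemma reach_avoid {f : Sym2 V} {a b z u : V}
    (hz : (Γ.deleteEdges {f}).Reachable z u)
    (hza : ¬ (Γ.deleteEdges {f}).Reachable z a) :
    (Γ.deleteEdges {s(a, b)}).Reachable z u := by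
  classical
  obtain ⟨p⟩ := hz
  have he : s(a, b) ∉ p.edges := fun hmem =>
    hza ⟨p.takeUntil a (p.fst_mem_support_of_mem_edges hmem)⟩
  have hp : ((Γ.deleteEdges {f}).deleteEdges {s(a, b)}).Reachable z u :=
    ⟨p.toDeleteEdges _ (fun e hee => by
      simp only [Set.mem_singleton_iff]; rintro rfl; exact he hee)⟩
  refine hp.mono ?_
  rw [deleteEdges_deleteEdges]
  exact Γ.deleteEdges_anti (by simp)

variable {α : Type*} {G : SimpleGraph α}

lemma bicomp_le_delete {e : Sym2 α} (he : G.IsBridge e) :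
    bicompGraph G ≤ G.deleteEdges {e} :=
  G.deleteEdges_anti (Set.singleton_subset_iff.mpr he)

lemma pendant_supp_eq {C : (bicompGraph G).ConnectedComponent}
    (hC : IsPendant G C) :
    ∃ a b : α, G.IsBridge s(a, b) ∧ a ∈ C.supp ∧ b ∉ C.supp ∧
      (∀ e', G.IsBridge e' → (∃ x ∈ C.supp, x ∈ e') → e' = s(a, b)) ∧
      C.supp = {u | (G.deleteEdges {s(a, b)}).Reachable a u} := by
  obtain ⟨e, ⟨hbr, x, hxC, hxe⟩, huniq⟩ := hC
  obtain ⟨y, rfl⟩ := Sym2.mem_iff_exists.mp hxe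
  refine ⟨x, y, hbr, hxC, ?_, ?_, ?_⟩
  · intro hyC
    exact not_reach_of_isBridge hbr
      ((mem_supp_reach hxC hyC).mono (bicomp_le_delete hbr))
  · rintro e' hb' ⟨z, hzC, hze'⟩
    exact huniq e' ⟨hb', z, hzC, hze'⟩
  · apply Set.eq_of_subset_of_subset
    · intro u hu
      exact (mem_supp_reach hxC hu).mono (bicomp_le_delete hbr)
    · intro u hu
      obtain ⟨p⟩ := hu
      refine closed_under_walk ?_ p hxC
      intro z w hz hzw
      rw [deleteEdges_adj] at hzw
      obtain ⟨hadj, hne⟩ := hzw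
      by_cases hbzw : G.IsBridge s(z, w)
      · exact absurd (huniq _ ⟨hbzw, z, hz, Sym2.mem_mk_left z w⟩) (by simpa using hne)
      · have hGadj : (bicompGraph G).Adj z w := by
          simp only [bicompGraph, deleteEdges_adj, Set.mem_setOf_eq]
          exact ⟨hadj, hbzw⟩
        rw [ConnectedComponent.mem_supp_iff] at hz ⊢
        rw [← hz]
        exact ConnectedComponent.eq.mpr hGadj.symm.reachable

lemma side_has_leaf [Fintype α] {ℓ : ℕ} (hG : G.Connected)
    (P : Fin ℓ → (bicompGraph G).ConnectedComponent)
    (hPall : ∀ C, IsPendant G C → ∃ i, P i = C)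
    (v : Fin ℓ → α) (hv : ∀ i, v i ∈ (P i).supp) :
    ∀ {a b : α}, G.IsBridge s(a, b) → ∃ i, (G.deleteEdges {s(a, b)}).Reachable b (v i) := by
  have main : ∀ n : ℕ, ∀ a b : α, G.IsBridge s(a, b) →
      ({u | (G.deleteEdges {s(a, b)}).Reachable b u}).ncard ≤ n →
      ∃ i, (G.deleteEdges {s(a, b)}).Reachable b (v i) := by
    intro n
    induction n using Nat.strong_induction_on with
    | _ n ih =>
      intro a b hbr hcard
      by_cases hpend : IsPendant G ((bicompGraph G).connectedComponentMk b)
      · obtain ⟨i, hPi⟩ := hPall _ hpend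
        have hvi : v i ∈ ((bicompGraph G).connectedComponentMk b).supp := by
          exact hPi ▸ hv i
        exact ⟨i, (mem_supp_reach (ConnectedComponent.connectedComponentMk_mem) hvi).mono
          (bicomp_le_delete hbr)⟩
      · have h2 : ∃ f, (G.IsBridge f ∧
            ∃ x ∈ ((bicompGraph G).connectedComponentMk b).supp, x ∈ f) ∧ f ≠ s(a, b) := by
          by_contra hno
          push_neg at hno
          exact hpend ⟨s(a, b),
            ⟨hbr, b, ConnectedComponent.connectedComponentMk_mem, Sym2.mem_mk_right a b⟩,
            fun y hy => hno y hy⟩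
        obtain ⟨f, ⟨hbf, c, hcC, hcf⟩, hfne⟩ := h2
        obtain ⟨d, rfl⟩ := Sym2.mem_iff_exists.mp hcf
        have hbc : (G.deleteEdges {s(c, d)}).Reachable b c :=
          (mem_supp_reach ConnectedComponent.connectedComponentMk_mem hcC).mono
            (bicomp_le_delete hbf)
        have hdc : ¬ (G.deleteEdges {s(c, d)}).Reachable d c := fun h =>
          not_reach_of_isBridge hbf h.symm
        have hdb : ¬ (G.deleteEdges {s(c, d)}).Reachable d b := fun h =>
          hdc (h.trans hbc)
        have habf : (G.deleteEdges {s(c, d)}).Adj a b := by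
          simp only [deleteEdges_adj, Set.mem_singleton_iff]
          exact ⟨bridge_adj (hG.preconnected a b) hbr, fun h => hfne h.symm⟩
        have hda : ¬ (G.deleteEdges {s(c, d)}).Reachable d a := fun h =>
          hdb (h.trans habf.reachable)
        have hbd : (G.deleteEdges {s(a, b)}).Reachable b d := by
          have h1 : (G.deleteEdges {s(a, b)}).Reachable b c :=
            (mem_supp_reach ConnectedComponent.connectedComponentMk_mem hcC).mono
              (bicomp_le_delete hbr)
          have h2 : (G.deleteEdges {s(a, b)}).Adj c d := by
            simp only [deleteEdges_adj, Set.mem_singleton_iff]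
            exact ⟨bridge_adj (hG.preconnected c d) hbf, hfne⟩
          exact h1.trans h2.reachable
        have hsub : {u | (G.deleteEdges {s(c, d)}).Reachable d u} ⊆
            {u | (G.deleteEdges {s(a, b)}).Reachable b u} := by
          intro u hu
          exact hbd.trans (reach_avoid hu hda)
        have hssub : {u | (G.deleteEdges {s(c, d)}).Reachable d u} ⊂
            {u | (G.deleteEdges {s(a, b)}).Reachable b u} :=
          ⟨hsub, fun hsup => hdb (hsup (Reachable.refl b))⟩
        have hlt : ({u | (G.deleteEdges {s(c, d)}).Reachable d u}).ncard < n :=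
          lt_of_lt_of_le (Set.ncard_lt_ncard hssub (Set.toFinite _)) hcard
        obtain ⟨i, hi⟩ := ih _ hlt c d hbf le_rfl
        exact ⟨i, hsub hi⟩
  intro a b hbr
  exact main _ a b hbr le_rfl

/-- Laminarity: some side of the bridge `f = s(c,d)` is contained in some side of the
bridge `e = s(a,b)`. -/
lemma laminar (hG : G.Connected) {a b c d : α} (he : G.IsBridge s(a, b))
    (hf : G.IsBridge s(c, d)) (hne : s(c, d) ≠ s(a, b)) :
    ∃ z ∈ ({c, d} : Set α), ∃ p ∈ ({a, b} : Set α),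
      ∀ u, (G.deleteEdges {s(c, d)}).Reachable z u →
        (G.deleteEdges {s(a, b)}).Reachable p u := by
  have hab : (G.deleteEdges {s(c, d)}).Adj a b := by
    simp only [deleteEdges_adj, Set.mem_singleton_iff]
    exact ⟨bridge_adj (hG.preconnected a b) he, fun h => hne h.symm⟩
  have hcd : (G.deleteEdges {s(a, b)}).Adj c d := by
    simp only [deleteEdges_adj, Set.mem_singleton_iff]
    exact ⟨bridge_adj (hG.preconnected c d) hf, hne⟩
  -- choose z ∈ {c,d} not reaching a in G - f
  obtain ⟨z, hzm, hza, hzcd⟩ : ∃ z ∈ ({c, d} : Set α),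
      ¬ (G.deleteEdges {s(c, d)}).Reachable z a ∧
      ((G.deleteEdges {s(a, b)}).Reachable c z) := by
    by_cases hca : (G.deleteEdges {s(c, d)}).Reachable c a
    · refine ⟨d, by simp, fun h => not_reach_of_isBridge hf (hca.trans h.symm), hcd.reachable⟩
    · exact ⟨c, by simp, hca, Reachable.refl _⟩
  -- choose p ∈ {a,b} reaching c in G - e
  obtain ⟨p, hpm, hpc⟩ : ∃ p ∈ ({a, b} : Set α), (G.deleteEdges {s(a, b)}).Reachable p c := by
    rcases side_total hG c with h | h
    · exact ⟨a, by simp, h⟩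
    · exact ⟨b, by simp, h⟩
  exact ⟨z, hzm, p, hpm, fun u hu => (hpc.trans hzcd).trans (reach_avoid hu hza)⟩


section LeafSets

variable [Fintype α] {ℓ : ℕ}

open Classical in
/-- The set of leaf indices on the `a`-side of the bridge `s(a,b)`. -/
noncomputable def leafSet (G : SimpleGraph α) (v : Fin ℓ → α) (a b : α) : Finset (Fin ℓ) :=
  Finset.univ.filter (fun i => (G.deleteEdges {s(a, b)}).Reachable a (v i))

lemma mem_leafSet {G : SimpleGraph α} {v : Fin ℓ → α} {a b : α} {i : Fin ℓ} :
    i ∈ leafSet G v a b ↔ (G.deleteEdges {s(a, b)}).Reachable a (v i) := by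
  classical
  simp [leafSet]

lemma leafSet_compl {v : Fin ℓ → α} (hG : G.Connected) {a b : α}
    (hbr : G.IsBridge s(a, b)) :
    leafSet G v b a = (leafSet G v a b)ᶜ := by
  ext i
  rw [Finset.mem_compl, mem_leafSet, mem_leafSet, Sym2.eq_swap]
  constructor
  · intro h h'
    exact not_reach_of_isBridge hbr (h'.trans h.symm)
  · intro h
    exact (side_total hG (v i)).resolve_left h

lemma leafSet_pairwise {v : Fin ℓ → α} (hG : G.Connected) {k : ℕ} (hk : 2 * k ≤ ℓ) :
    ∀ S ∈ {S : Finset (Fin ℓ) |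
        (∃ a b, G.IsBridge s(a, b) ∧ S = leafSet G v a b) ∧ S.card = k},
      ∀ T ∈ {S : Finset (Fin ℓ) |
        (∃ a b, G.IsBridge s(a, b) ∧ S = leafSet G v a b) ∧ S.card = k},
      S = T ∨ Disjoint S T := by
  rintro S ⟨⟨a, b, hab, rfl⟩, hScard⟩ T ⟨⟨c, d, hcd, rfl⟩, hTcard⟩
  by_cases hne : s(c, d) = s(a, b)
  · rw [Sym2.eq_iff] at hne
    rcases hne with ⟨h1, h2⟩ | ⟨h1, h2⟩
    · rw [h1, h2]
      exact Or.inl rfl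
    · right
      rw [h1, h2, leafSet_compl hG hab]
      exact disjoint_compl_right
  · obtain ⟨z, hz, p, hp, himp⟩ := laminar hG hab hcd hne
    rw [Set.mem_insert_iff, Set.mem_singleton_iff] at hz hp
    have key : ∀ LZ LP : Finset (Fin ℓ),
        (LZ = leafSet G v c d ∨ LZ = (leafSet G v c d)ᶜ) →
        (LP = leafSet G v a b ∨ LP = (leafSet G v a b)ᶜ) →
        LZ ⊆ LP → leafSet G v a b = leafSet G v c d ∨
          Disjoint (leafSet G v a b) (leafSet G v c d) := by
      rintro LZ LP (rfl | rfl) (rfl | rfl) hsub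
      · left
        exact (Finset.eq_of_subset_of_card_le hsub (by rw [hScard, hTcard])).symm
      · right
        exact Finset.disjoint_left.mpr fun {x} hx hx' =>
          Finset.mem_compl.mp (hsub hx') hx
      · have h1 : (leafSet G v c d)ᶜ.card = ℓ - k := by
          rw [Finset.card_compl, hTcard, Fintype.card_fin]
        have h2 : ℓ - k ≤ k := by
          have h := Finset.card_le_card hsub
          rwa [h1, hScard] at h
        have hkle : k ≤ ℓ := by
          calc k = (leafSet G v a b).card := hScard.symm
          _ ≤ Fintype.card (Fin ℓ) := Finset.card_le_univ _
          _ = ℓ := Fintype.card_fin ℓ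
        have h4 : (leafSet G v c d)ᶜ = leafSet G v a b :=
          Finset.eq_of_subset_of_card_le hsub (by rw [hScard, h1]; omega)
        right
        rw [← h4]
        exact disjoint_compl_left
      · left
        have h5 : leafSet G v a b ⊆ leafSet G v c d := by
          intro x hx
          by_contra hx'
          exact Finset.mem_compl.mp (hsub (Finset.mem_compl.mpr hx')) hx
        exact Finset.eq_of_subset_of_card_le h5 (by rw [hScard, hTcard])
    have hcompl_cd : leafSet G v d c = (leafSet G v c d)ᶜ := leafSet_compl hG hcd
    have hcompl_ab : leafSet G v b a = (leafSet G v a b)ᶜ := leafSet_compl hG hab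
    rcases hz with hz | hz <;> rcases hp with hp | hp
    · refine key (leafSet G v c d) (leafSet G v a b) (Or.inl rfl) (Or.inl rfl) ?_
      intro i hi
      rw [mem_leafSet] at hi ⊢
      rw [hz] at himp
      rw [hp] at himp
      exact himp _ hi
    · refine key (leafSet G v c d) (leafSet G v a b)ᶜ (Or.inl rfl) (Or.inr rfl) ?_
      intro i hi
      rw [← hcompl_ab, mem_leafSet, Sym2.eq_swap]
      rw [mem_leafSet] at hi
      rw [hz, hp] at himp
      exact himp _ hi
    · refine key (leafSet G v c d)ᶜ (leafSet G v a b) (Or.inr rfl) (Or.inl rfl) ?_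
      intro i hi
      rw [← hcompl_cd, mem_leafSet, Sym2.eq_swap] at hi
      rw [mem_leafSet]
      rw [hz, hp] at himp
      exact himp _ hi
    · refine key (leafSet G v c d)ᶜ (leafSet G v a b)ᶜ (Or.inr rfl) (Or.inr rfl) ?_
      intro i hi
      rw [← hcompl_cd, mem_leafSet, Sym2.eq_swap] at hi
      rw [← hcompl_ab, mem_leafSet, Sym2.eq_swap]
      rw [hz, hp] at himp
      exact himp _ hi

end LeafSets

/-- Selection lemma: a family of `m`-sets which is pairwise equal-or-disjoint does not
exhaust all `m`-subsets. -/
lemma avoid_family {ι : Type*} [Fintype ι] [DecidableEq ι] {m : ℕ} (𝒟 : Set (Finset ι))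
    (hm : 2 ≤ m) (hlt : m < Fintype.card ι)
    (hcard : ∀ S ∈ 𝒟, S.card = m)
    (hpair : ∀ S ∈ 𝒟, ∀ T ∈ 𝒟, S = T ∨ Disjoint S T) :
    ∃ A : Finset ι, A.card = m ∧ A ∉ 𝒟 := by
  by_cases h2 : ∃ S ∈ 𝒟, ∃ T ∈ 𝒟, S ≠ T
  · obtain ⟨S, hS, T, hT, hST⟩ := h2
    have hdisj : Disjoint S T := (hpair S hS T hT).resolve_left hST
    obtain ⟨a, ha⟩ := Finset.card_pos.mp (show 0 < S.card by rw [hcard S hS]; omega)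
    obtain ⟨b, hb⟩ := Finset.card_pos.mp (show 0 < T.card by rw [hcard T hT]; omega)
    have hab : a ≠ b := fun h => (Finset.disjoint_left.mp hdisj ha) (h ▸ hb)
    have hc2 : ({a, b} : Finset ι).card ≤ m := by
      rw [Finset.card_insert_of_notMem (by simpa using hab), Finset.card_singleton]
      omega
    obtain ⟨A, hsub, -, hAcard⟩ := Finset.exists_subsuperset_card_eq
      (Finset.subset_univ ({a, b} : Finset ι)) hc2 (by simpa using hlt.le)
    refine ⟨A, hAcard, fun hA => ?_⟩
    have haA : a ∈ A := hsub (by simp)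
    have hbA : b ∈ A := hsub (by simp)
    have h1 : A = S := (hpair A hA S hS).resolve_right
      (fun hd => (Finset.disjoint_left.mp hd haA) ha)
    have h2' : A = T := (hpair A hA T hT).resolve_right
      (fun hd => (Finset.disjoint_left.mp hd hbA) hb)
    exact hST (h1 ▸ h2')
  · push_neg at h2
    by_cases hne : ∃ S, S ∈ 𝒟
    · obtain ⟨S, hS⟩ := hne
      obtain ⟨a, ha⟩ := Finset.card_pos.mp (show 0 < S.card by rw [hcard S hS]; omega)
      obtain ⟨b, hb⟩ : ∃ b, b ∉ S := by
        by_contra hall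
        push_neg at hall
        have : Finset.univ ⊆ S := fun x _ => hall x
        have := Finset.card_le_card this
        rw [hcard S hS, Finset.card_univ] at this
        omega
      refine ⟨insert b (S.erase a), ?_, ?_⟩
      · rw [Finset.card_insert_of_notMem (fun h => hb (Finset.erase_subset _ _ h)),
          Finset.card_erase_of_mem ha, hcard S hS]
        omega
      · intro hmem
        have : insert b (S.erase a) = S := h2 _ hmem S hS
        exact hb (this ▸ Finset.mem_insert_self b _)
    · push_neg at hne
      obtain ⟨A, -, hAcard⟩ := Finset.exists_subset_card_eq
        (show m ≤ Finset.univ.card by simpa using hlt.le)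
      exact ⟨A, hAcard, fun h => hne A h⟩

lemma exists_good [Fintype α] {ℓ : ℕ} {v : Fin ℓ → α}
    (hG : G.Connected)
    (P : Fin ℓ → (bicompGraph G).ConnectedComponent)
    (hPall : ∀ C, IsPendant G C → ∃ i, P i = C)
    (hv : ∀ i, v i ∈ (P i).supp)
    {m : ℕ} (hm2 : 2 ≤ m) (hmℓ : m ≤ ℓ) (hne1 : ℓ - m ≠ 1) :
    ∃ A : Finset (Fin ℓ), A.card = m ∧
      ∀ a b, G.IsBridge s(a, b) → A ≠ leafSet G v a b := by
  classical
  by_cases hml : m = ℓ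
  · subst hml
    refine ⟨Finset.univ, by simp, ?_⟩
    intro a b hbr heq
    obtain ⟨i, hi⟩ := side_has_leaf hG P hPall v hv hbr
    have hmem : i ∈ leafSet G v b a := mem_leafSet.mpr (by rw [Sym2.eq_swap]; exact hi)
    rw [leafSet_compl hG hbr, ← heq] at hmem
    simp at hmem
  · have hmlt : m < ℓ := lt_of_le_of_ne hmℓ hml
    by_cases h2m : 2 * m ≤ ℓ
    · obtain ⟨A, hcard, hA⟩ := avoid_family (ι := Fin ℓ)
        {S | (∃ a b, G.IsBridge s(a, b) ∧ S = leafSet G v a b) ∧ S.card = m}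
        hm2 (by rwa [Fintype.card_fin]) (fun S hS => hS.2) (leafSet_pairwise hG h2m)
      exact ⟨A, hcard, fun a b hbr heq => hA ⟨⟨a, b, hbr, heq⟩, hcard⟩⟩
    · set k := ℓ - m with hkdef
      have hk2 : 2 ≤ k := by omega
      have h2k : 2 * k ≤ ℓ := by omega
      have hklt : k < ℓ := by omega
      obtain ⟨B, hBcard, hB⟩ := avoid_family (ι := Fin ℓ)
        {S | (∃ a b, G.IsBridge s(a, b) ∧ S = leafSet G v a b) ∧ S.card = k}
        hk2 (by rwa [Fintype.card_fin]) (fun S hS => hS.2) (leafSet_pairwise hG h2k)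
      refine ⟨Bᶜ, by rw [Finset.card_compl, hBcard, Fintype.card_fin]; omega, ?_⟩
      intro a b hbr heq
      apply hB
      refine ⟨⟨b, a, by rw [Sym2.eq_swap]; exact hbr, ?_⟩, hBcard⟩
      rw [leafSet_compl hG hbr, ← heq, compl_compl]

section Superpose

variable {β : Type*} {H : SimpleGraph β} {φ : β ↪ α}

local notation "F" => superpose G H φ

lemma G_le_F : G ≤ superpose G H φ := le_sup_left

lemma map_le_F : SimpleGraph.map φ H ≤ superpose G H φ := le_sup_right

lemma F_adj_iff {u w : α} : (superpose G H φ).Adj u w ↔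
    G.Adj u w ∨ (SimpleGraph.map φ H).Adj u w := Iff.rfl

/-- Edges of `map φ H` are not edges of `G`, given the nonadjacency hypothesis. -/
lemma map_not_G_adj (hnadj : ∀ x y : β, H.Adj x y → ¬ G.Adj (φ x) (φ y))
    {u w : α} (h : (SimpleGraph.map φ H).Adj u w) : ¬ G.Adj u w := by
  obtain ⟨-, x, y, hxy, rfl, rfl⟩ := h
  exact hnadj x y hxy

lemma G_delete_le_F_delete {s : Set (Sym2 α)} :
    G.deleteEdges s ≤ (superpose G H φ).deleteEdges s := by
  intro u w h
  rw [deleteEdges_adj] at h ⊢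
  exact ⟨Or.inl h.1, h.2⟩

/-- A bridge of the superposition is a bridge of `G`. -/
lemma super_bridge_to_G (hG : G.Connected)
    (hnadj : ∀ x y : β, H.Adj x y → ¬ G.Adj (φ x) (φ y))
    {u w : α} (hbr : (superpose G H φ).IsBridge s(u, w)) : G.IsBridge s(u, w) := by
  have hadj : (superpose G H φ).Adj u w := bridge_adj ((hG.preconnected u w).mono G_le_F) hbr
  rcases hadj with hGuw | hmap
  · refine isBridge_iff.mpr ?_
    intro hreach
    exact (isBridge_iff.mp hbr) (Reachable.mono G_delete_le_F_delete hreach)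
  · exfalso
    have hnG : ¬ G.Adj u w := map_not_G_adj hnadj hmap
    have hle : G ≤ (superpose G H φ).deleteEdges {s(u, w)} := by
      intro p q hpq
      rw [deleteEdges_adj]
      refine ⟨Or.inl hpq, ?_⟩
      simp only [Set.mem_singleton_iff, Sym2.eq_iff]
      rintro (⟨rfl, rfl⟩ | ⟨rfl, rfl⟩)
      · exact hnG hpq
      · exact hnG hpq.symm
    exact (isBridge_iff.mp hbr) ((hG.preconnected u w).mono hle)

lemma super_bridge_to_G' (hG : G.Connected)
    (hnadj : ∀ x y : β, H.Adj x y → ¬ G.Adj (φ x) (φ y))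
    {e : Sym2 α} (hbr : (superpose G H φ).IsBridge e) : G.IsBridge e := by
  induction e with
  | _ u w => exact super_bridge_to_G hG hnadj hbr

/-- `map φ H` avoids all bridges of the superposition. -/
lemma map_le_bicomp (hG : G.Connected)
    (hnadj : ∀ x y : β, H.Adj x y → ¬ G.Adj (φ x) (φ y)) :
    SimpleGraph.map φ H ≤ bicompGraph (superpose G H φ) := by
  intro u w h
  have : ¬ (superpose G H φ).IsBridge s(u, w) := fun hbr =>
    map_not_G_adj hnadj h (bridge_adj (hG.preconnected u w) (super_bridge_to_G hG hnadj hbr))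
  exact deleteEdges_adj.mpr ⟨Or.inr h, this⟩

lemma bicompG_le_bicompF (hG : G.Connected)
    (hnadj : ∀ x y : β, H.Adj x y → ¬ G.Adj (φ x) (φ y)) :
    bicompGraph G ≤ bicompGraph (superpose G H φ) := by
  intro u w h
  rw [bicompGraph, deleteEdges_adj] at h ⊢
  refine ⟨Or.inl h.1, fun hbr => h.2 (super_bridge_to_G' hG hnadj hbr)⟩

/-- Covered vertices are pairwise reachable in the bridge-free part of the superposition. -/
lemma covered_reach_bicomp (hG : G.Connected) (hH : H.Connected)
    (hnadj : ∀ x y : β, H.Adj x y → ¬ G.Adj (φ x) (φ y)) (x y : β) :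
    (bicompGraph (superpose G H φ)).Reachable (φ x) (φ y) := by
  have h1 : (SimpleGraph.map φ H).Reachable (φ x) (φ y) :=
    (hH.preconnected x y).map (SimpleGraph.Embedding.map φ H).toHom
  exact h1.mono (map_le_bicomp hG hnadj)

/-- Stability of sides: if all covered vertices are on the `a`-side of the bridge `s(a,b)`
of `G`, then sides in `F - e` agree with sides in `G - e`. -/
lemma super_side_stable {a b : α} (hGbr : G.IsBridge s(a, b))
    (hcov : ∀ x : β, (G.deleteEdges {s(a, b)}).Reachable a (φ x)) :
    (∀ u, ((superpose G H φ).deleteEdges {s(a, b)}).Reachable a u ↔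
        (G.deleteEdges {s(a, b)}).Reachable a u) ∧
    (∀ u, ((superpose G H φ).deleteEdges {s(a, b)}).Reachable b u ↔
        (G.deleteEdges {s(a, b)}).Reachable b u) := by
  constructor
  · intro u
    constructor
    · intro h
      obtain ⟨p⟩ := h
      refine closed_under_walk (s := {u | (G.deleteEdges {s(a, b)}).Reachable a u}) ?_ p
        (Reachable.refl a)
      intro z w hz hzw
      rw [deleteEdges_adj] at hzw
      obtain ⟨hadj, hne⟩ := hzw
      rcases hadj with hGzw | hmap
      · exact Reachable.trans hz (SimpleGraph.Adj.reachable (deleteEdges_adj.mpr ⟨hGzw, hne⟩))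
      · obtain ⟨-, x, y, hxy, rfl, rfl⟩ := hmap
        exact hcov y
    · exact fun h => h.mono G_delete_le_F_delete
  · intro u
    constructor
    · intro h
      obtain ⟨p⟩ := h
      refine closed_under_walk (s := {u | (G.deleteEdges {s(a, b)}).Reachable b u}) ?_ p
        (Reachable.refl b)
      intro z w hz hzw
      rw [deleteEdges_adj] at hzw
      obtain ⟨hadj, hne⟩ := hzw
      rcases hadj with hGzw | hmap
      · exact Reachable.trans hz (SimpleGraph.Adj.reachable (deleteEdges_adj.mpr ⟨hGzw, hne⟩))
      · obtain ⟨-, x, y, hxy, rfl, rfl⟩ := hmap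
        exact absurd ((hcov x).trans hz.symm) (not_reach_of_isBridge hGbr)
    · exact fun h => h.mono G_delete_le_F_delete

/-- If all covered vertices are on the `a`-side, a bridge of `G` stays a bridge of `F`. -/
lemma one_side_bridge {a b : α} (hGbr : G.IsBridge s(a, b))
    (hcov : ∀ x : β, (G.deleteEdges {s(a, b)}).Reachable a (φ x)) :
    (superpose G H φ).IsBridge s(a, b) := by
  refine isBridge_iff.mpr ?_
  intro hreach
  exact (not_reach_of_isBridge hGbr) (((super_side_stable hGbr hcov).1 b).mp hreach)

lemma map_le_F_delete (hnadj : ∀ x y : β, H.Adj x y → ¬ G.Adj (φ x) (φ y))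
    {a b : α} (hGab : G.Adj a b) :
    SimpleGraph.map φ H ≤ (superpose G H φ).deleteEdges {s(a, b)} := by
  intro p q h
  rw [deleteEdges_adj]
  refine ⟨Or.inr h, ?_⟩
  simp only [Set.mem_singleton_iff]
  intro hh
  refine (map_not_G_adj hnadj h) ?_
  rw [Sym2.eq_iff] at hh
  rcases hh with ⟨rfl, rfl⟩ | ⟨rfl, rfl⟩
  · exact hGab
  · exact hGab.symm

/-- Characterization of when a bridge of `G` remains a bridge of the superposition. -/
lemma super_bridge_iff (hG : G.Connected) (hH : H.Connected)
    (hnadj : ∀ x y : β, H.Adj x y → ¬ G.Adj (φ x) (φ y))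
    {a b : α} (hGbr : G.IsBridge s(a, b)) :
    (superpose G H φ).IsBridge s(a, b) ↔
      ((∀ x, (G.deleteEdges {s(a, b)}).Reachable a (φ x)) ∨
       (∀ x, (G.deleteEdges {s(a, b)}).Reachable b (φ x))) := by
  constructor
  · intro hbr
    by_contra hmix
    push_neg at hmix
    obtain ⟨⟨x1, hx1⟩, ⟨x2, hx2⟩⟩ := hmix
    have h1 : (G.deleteEdges {s(a, b)}).Reachable b (φ x1) :=
      (side_total hG _).resolve_left hx1
    have h2 : (G.deleteEdges {s(a, b)}).Reachable a (φ x2) :=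
      (side_total hG _).resolve_right hx2
    have hmid : ((superpose G H φ).deleteEdges {s(a, b)}).Reachable (φ x2) (φ x1) :=
      ((hH.preconnected x2 x1).map (SimpleGraph.Embedding.map φ H).toHom).mono
        (map_le_F_delete hnadj (bridge_adj (hG.preconnected a b) hGbr))
    have hreach : ((superpose G H φ).deleteEdges {s(a, b)}).Reachable a b :=
      ((h2.mono G_delete_le_F_delete).trans hmid).trans (h1.mono G_delete_le_F_delete).symm
    exact (isBridge_iff.mp hbr) hreach
  · rintro (hcov | hcov)
    · exact one_side_bridge hGbr hcov
    · have h := one_side_bridge (G := G) (H := H) (φ := φ) (a := b) (b := a)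
        (by rw [Sym2.eq_swap]; exact hGbr) (fun x => by rw [Sym2.eq_swap]; exact hcov x)
      rwa [Sym2.eq_swap] at h

/-- Orient a bridge of the superposition so that all covered vertices lie on the side of
the first endpoint. -/
lemma orient_bridge_pair (hG : G.Connected) (hH : H.Connected)
    (hnadj : ∀ x y : β, H.Adj x y → ¬ G.Adj (φ x) (φ y))
    {a b : α} (hbr : (superpose G H φ).IsBridge s(a, b)) :
    ∃ r s : α, s(r, s) = s(a, b) ∧ G.IsBridge s(r, s) ∧
      (∀ x, (G.deleteEdges {s(r, s)}).Reachable r (φ x)) := by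
  have hGbr := super_bridge_to_G hG hnadj hbr
  rcases (super_bridge_iff hG hH hnadj hGbr).mp hbr with hcov | hcov
  · exact ⟨a, b, rfl, hGbr, hcov⟩
  · refine ⟨b, a, Sym2.eq_swap, ?_, ?_⟩
    · rw [Sym2.eq_swap]; exact hGbr
    · intro x; rw [Sym2.eq_swap]; exact hcov x

lemma orient_bridge (hG : G.Connected) (hH : H.Connected)
    (hnadj : ∀ x y : β, H.Adj x y → ¬ G.Adj (φ x) (φ y))
    {e : Sym2 α} (hbr : (superpose G H φ).IsBridge e) :
    ∃ r s : α, s(r, s) = e ∧ G.IsBridge s(r, s) ∧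
      (∀ x, (G.deleteEdges {s(r, s)}).Reachable r (φ x)) := by
  induction e with
  | _ a b => exact orient_bridge_pair hG hH hnadj hbr

lemma super_side_stable' {w z : α} (hGbr : G.IsBridge s(w, z))
    (hcov : ∀ x : β, (G.deleteEdges {s(w, z)}).Reachable z (φ x)) :
    ∀ u, ((superpose G H φ).deleteEdges {s(w, z)}).Reachable z u ↔
        (G.deleteEdges {s(w, z)}).Reachable z u := by
  have h := super_side_stable (H := H) (φ := φ) (a := z) (b := w)
    (by rw [Sym2.eq_swap]; exact hGbr) (fun x => by rw [Sym2.eq_swap]; exact hcov x)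
  intro u
  have h2 := h.1 u
  rwa [Sym2.eq_swap] at h2

lemma one_side_bridge' {w z : α} (hGbr : G.IsBridge s(w, z))
    (hcov : ∀ x : β, (G.deleteEdges {s(w, z)}).Reachable z (φ x)) :
    (superpose G H φ).IsBridge s(w, z) := by
  have h := one_side_bridge (H := H) (φ := φ) (a := z) (b := w)
    (by rw [Sym2.eq_swap]; exact hGbr) (fun x => by rw [Sym2.eq_swap]; exact hcov x)
  rwa [Sym2.eq_swap] at h

end Superpose

end Helper


open Helper

/-- Let `G` be connected with pendant biconnected components `P 0, …, P (ℓ-1)`, `ℓ ≥ 2`,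
and let `v i ∈ P i` be pairwise nonadjacent vertices. Let `H` be connected with
`2 ≤ |V(H)| ≤ ℓ` and `ℓ - |V(H)| ≠ 1`. Then there is an injective map
`φ : V(H) ↪ {v 0, …, v (ℓ-1)}` such that the set of (vertex sets of) pendant
biconnected components of `F = G ⊕_φ H` is exactly `{P i : v i ∉ φ(V(H))}`. -/
theorem stmt11 {α β : Type*} [Fintype α] [Fintype β]
    (G : SimpleGraph α) (hG : G.Connected) (ℓ : ℕ) (hℓ : 2 ≤ ℓ)
    (P : Fin ℓ → (bicompGraph G).ConnectedComponent)
    (hPinj : Function.Injective P)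
    (hPpend : ∀ i, IsPendant G (P i))
    (hPall : ∀ C : (bicompGraph G).ConnectedComponent, IsPendant G C → ∃ i, P i = C)
    (v : Fin ℓ → α) (hv : ∀ i, v i ∈ (P i).supp)
    (hvnadj : ∀ i j, i ≠ j → ¬ G.Adj (v i) (v j))
    (H : SimpleGraph β) (hH : H.Connected)
    (hcard2 : 2 ≤ Fintype.card β) (hcardℓ : Fintype.card β ≤ ℓ)
    (hne1 : ℓ - Fintype.card β ≠ 1) :
    ∃ φ : β ↪ α, (∀ x : β, φ x ∈ Set.range v) ∧
      {S : Set α | ∃ C : (bicompGraph (superpose G H φ)).ConnectedComponent,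
          IsPendant (superpose G H φ) C ∧ C.supp = S} =
        {S : Set α | ∃ i : Fin ℓ, v i ∉ Set.range (⇑φ) ∧ (P i).supp = S} := by
  classical
  -- v is injective
  have hvinj : Function.Injective v := by
    intro i j hij
    apply hPinj
    have h1 : (bicompGraph G).connectedComponentMk (v i) = P i := hv i
    have h2 : (bicompGraph G).connectedComponentMk (v j) = P j := hv j
    rw [← h1, ← h2, hij]
  have hsuppdisj : ∀ i j : Fin ℓ, i ≠ j → v i ∉ (P j).supp := by
    intro i j hne hmem
    exact hne (hPinj ((hv i).symm.trans hmem))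
  -- choose a good index set A
  obtain ⟨A, hAcard, hAgood⟩ := exists_good (v := v) hG P hPall hv hcard2 hcardℓ hne1
  have hcardA : Fintype.card β = Fintype.card A := by
    rw [Fintype.card_coe, hAcard]
  let eqv : β ≃ A := Fintype.equivOfCardEq hcardA
  let φ : β ↪ α := ⟨fun x => v (eqv x).1, fun x y h => eqv.injective (Subtype.ext (hvinj h))⟩
  have hφdef : ∀ x : β, φ x = v (eqv x).1 := fun _ => rfl
  refine ⟨φ, fun x => ⟨(eqv x).1, rfl⟩, ?_⟩
  have hφv : ∀ x : β, ∃ i ∈ A, φ x = v i := fun x => ⟨(eqv x).1, (eqv x).2, rfl⟩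
  have hcov_mem : ∀ i : Fin ℓ, v i ∈ Set.range (⇑φ) ↔ i ∈ A := by
    intro i
    constructor
    · rintro ⟨x, hx⟩
      have h := hvinj hx
      rw [← h]
      exact (eqv x).2
    · intro hi
      refine ⟨eqv.symm ⟨i, hi⟩, ?_⟩
      rw [hφdef, Equiv.apply_symm_apply]
  have hnadj : ∀ x y : β, H.Adj x y → ¬ G.Adj (φ x) (φ y) := by
    intro x y hxy
    have hne : (eqv x).1 ≠ (eqv y).1 :=
      fun h => (H.ne_of_adj hxy) (eqv.injective (Subtype.ext h))
    exact hvnadj _ _ hne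
  -- covered vertices lie on the far side of the bridge of an uncovered pendant component
  have hcov_far : ∀ k : Fin ℓ, k ∉ A → ∀ w z : α, G.IsBridge s(w, z) →
      (P k).supp = {u | (G.deleteEdges {s(w, z)}).Reachable w u} →
      ∀ x : β, (G.deleteEdges {s(w, z)}).Reachable z (φ x) := by
    intro k hk w z hbr hsupp x
    obtain ⟨i, hiA, hφx⟩ := hφv x
    have hne : i ≠ k := fun h => hk (h ▸ hiA)
    have hnm : v i ∉ (P k).supp := hsuppdisj i k hne
    rw [hsupp] at hnm
    rw [hφx]
    exact (side_total hG (v i)).resolve_left hnm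
  have hbridgeF : ∀ k : Fin ℓ, k ∉ A → ∀ w z : α, G.IsBridge s(w, z) →
      (P k).supp = {u | (G.deleteEdges {s(w, z)}).Reachable w u} →
      (superpose G H φ).IsBridge s(w, z) := by
    intro k hk w z hbr hsupp
    exact one_side_bridge' hbr (hcov_far k hk w z hbr hsupp)
  -- RHS ⊆ LHS main content
  have hRHS : ∀ k : Fin ℓ, k ∉ A →
      IsPendant (superpose G H φ)
        ((bicompGraph (superpose G H φ)).connectedComponentMk (v k)) ∧
      ((bicompGraph (superpose G H φ)).connectedComponentMk (v k)).supp = (P k).supp := by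
    intro k hk
    obtain ⟨w, z, hbr, hw, hznot, huniqG, hsupp⟩ := pendant_supp_eq (hPpend k)
    have hekF : (superpose G H φ).IsBridge s(w, z) := hbridgeF k hk w z hbr hsupp
    have hsub1 : ((bicompGraph (superpose G H φ)).connectedComponentMk (v k)).supp ⊆
        (P k).supp := by
      intro u hu
      rw [mem_supp_mk_iff] at hu
      obtain ⟨p⟩ := hu
      refine closed_under_walk (s := ((P k).supp : Set α)) ?_ p (hv k)
      intro x y hx hxy
      rw [bicompGraph, deleteEdges_adj, Set.mem_setOf_eq] at hxy
      obtain ⟨hadjF, hnbr⟩ := hxy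
      rcases hadjF with hGxy | hmap
      · by_cases hgb : G.IsBridge s(x, y)
        · exact absurd (by rw [huniqG _ hgb ⟨x, hx, Sym2.mem_mk_left x y⟩]; exact hekF) hnbr
        · have hGadj : (bicompGraph G).Adj x y := by
            rw [bicompGraph, deleteEdges_adj]; exact ⟨hGxy, hgb⟩
          rw [ConnectedComponent.mem_supp_iff] at hx ⊢
          rw [← hx]
          exact ConnectedComponent.eq.mpr hGadj.symm.reachable
      · obtain ⟨-, x1, y1, hxy1, rfl, rfl⟩ := hmap
        obtain ⟨i, hiA, hφx⟩ := hφv x1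
        have hik : i ≠ k := fun h => hk (h ▸ hiA)
        exact absurd (hφx ▸ hx) (hsuppdisj i k hik)
    have hsub2 : (P k).supp ⊆
        ((bicompGraph (superpose G H φ)).connectedComponentMk (v k)).supp := by
      intro u hu
      rw [mem_supp_mk_iff]
      exact (mem_supp_reach (hv k) hu).mono (bicompG_le_bicompF hG hnadj)
    have hsuppEq := Set.Subset.antisymm hsub1 hsub2
    refine ⟨⟨s(w, z), ⟨hekF, w, ?_, Sym2.mem_mk_left w z⟩, ?_⟩, hsuppEq⟩
    · rw [hsuppEq]
      exact hw
    · rintro e' ⟨hbre', x0, hx0, hx0e⟩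
      have hGbre' := super_bridge_to_G' hG hnadj hbre'
      exact huniqG e' hGbre' ⟨x0, hsuppEq ▸ hx0, hx0e⟩
  -- LHS ⊆ RHS main content
  have hLHS : ∀ C : (bicompGraph (superpose G H φ)).ConnectedComponent,
      IsPendant (superpose G H φ) C → ∃ i : Fin ℓ, i ∉ A ∧ (P i).supp = C.supp := by
    intro C hCpend
    obtain ⟨a, b, hFbr, haC, hbC, huniqF, hsuppC⟩ := pendant_supp_eq hCpend
    by_cases hcovC : ∃ x : β, φ x ∈ C.supp
    · exfalso
      obtain ⟨x0, hx0⟩ := hcovC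
      have hallcov : ∀ y : β, φ y ∈ C.supp := by
        intro y
        have hr : (bicompGraph (superpose G H φ)).Reachable (φ x0) (φ y) :=
          covered_reach_bicomp hG hH hnadj x0 y
        rw [ConnectedComponent.mem_supp_iff] at hx0 ⊢
        rw [← hx0]
        exact ConnectedComponent.eq.mpr hr.symm
      obtain ⟨r, s, hrs, hGrs, hcovr⟩ := orient_bridge_pair hG hH hnadj hFbr
      have hmain : G.IsBridge s(a, b) ∧
          ∀ x, (G.deleteEdges {s(a, b)}).Reachable a (φ x) := by
        rw [Sym2.eq_iff] at hrs
        rcases hrs with ⟨h1, h2⟩ | ⟨h1, h2⟩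
        · rw [h1, h2] at hGrs hcovr
          exact ⟨hGrs, hcovr⟩
        · exfalso
          have hfx : ((superpose G H φ).deleteEdges {s(r, s)}).Reachable s (φ x0) := by
            rw [h1, h2, Sym2.eq_swap]
            have hmem := hallcov x0
            rw [hsuppC] at hmem
            exact hmem
          have hstab := super_side_stable (H := H) (φ := φ) hGrs hcovr
          have hGa : (G.deleteEdges {s(r, s)}).Reachable s (φ x0) := (hstab.2 (φ x0)).mp hfx
          exact not_reach_of_isBridge hGrs ((hcovr x0).trans hGa.symm)
      obtain ⟨hGab, hcovab⟩ := hmain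
      have hsubA : A ⊆ leafSet G v a b := by
        intro i hi
        rw [mem_leafSet]
        obtain ⟨x, hx⟩ := (hcov_mem i).mpr hi
        rw [← hx]
        exact hcovab x
      have hAne := hAgood a b hGab
      obtain ⟨kk, hkkL, hkkA⟩ := Finset.exists_of_ssubset (lt_of_le_of_ne hsubA hAne)
      rw [mem_leafSet] at hkkL
      obtain ⟨w, z, hbrk, hwk, hznotk, huniqGk, hsuppk⟩ := pendant_supp_eq (hPpend kk)
      have hekF : (superpose G H φ).IsBridge s(w, z) := hbridgeF kk hkkA w z hbrk hsuppk
      have hvknotC : v kk ∉ C.supp := by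
        intro hvkC
        have h1 : ((superpose G H φ).deleteEdges {s(w, z)}).Reachable z (φ x0) :=
          (hcov_far kk hkkA w z hbrk hsuppk x0).mono G_delete_le_F_delete
        have h2 : ((superpose G H φ).deleteEdges {s(w, z)}).Reachable (φ x0) (v kk) :=
          (mem_supp_reach (hallcov x0) hvkC).mono (bicomp_le_delete hekF)
        have h3 := (super_side_stable' hbrk (hcov_far kk hkkA w z hbrk hsuppk)
          (v kk)).mp (h1.trans h2)
        have h4 : (G.deleteEdges {s(w, z)}).Reachable w (v kk) := by
          have h5 := hv kk
          rw [hsuppk] at h5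
          exact h5
        exact not_reach_of_isBridge hbrk (h4.trans h3.symm)
      obtain ⟨pwalk⟩ := hkkL
      obtain ⟨c, d, hcd, hcC, hdC⟩ := exists_boundary (s := C.supp) pwalk haC hvknotC
      rw [deleteEdges_adj] at hcd
      obtain ⟨hGcd, hcdne⟩ := hcd
      rw [Set.mem_singleton_iff] at hcdne
      by_cases hFcd : (superpose G H φ).IsBridge s(c, d)
      · exact hcdne (huniqF _ hFcd ⟨c, hcC, Sym2.mem_mk_left c d⟩)
      · apply hdC
        have hadj : (bicompGraph (superpose G H φ)).Adj c d := by
          rw [bicompGraph, deleteEdges_adj, Set.mem_setOf_eq]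
          exact ⟨Or.inl hGcd, hFcd⟩
        rw [ConnectedComponent.mem_supp_iff] at hcC ⊢
        rw [← hcC]
        exact ConnectedComponent.eq.mpr hadj.symm.reachable
    · have hGab : G.IsBridge s(a, b) := super_bridge_to_G hG hnadj hFbr
      have claimB : ∀ x0 y0 : α, x0 ∈ C.supp → G.IsBridge s(x0, y0) →
          ¬ (superpose G H φ).IsBridge s(x0, y0) → False := by
        intro x0 y0 hx0C hgbr hgF
        have hmix : ¬ ((∀ x, (G.deleteEdges {s(x0, y0)}).Reachable x0 (φ x)) ∨
            (∀ x, (G.deleteEdges {s(x0, y0)}).Reachable y0 (φ x))) :=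
          fun hs => hgF ((super_bridge_iff hG hH hnadj hgbr).mpr hs)
        push_neg at hmix
        obtain ⟨⟨z1, hz1⟩, ⟨z2, hz2⟩⟩ := hmix
        apply hcovC
        refine ⟨z1, ?_⟩
        have hall : ∀ e, (superpose G H φ).IsBridge e →
            ((superpose G H φ).deleteEdges {e}).Reachable x0 (φ z1) := by
          intro e he
          obtain ⟨r, s, hrs, hGrs, hcovr⟩ := orient_bridge hG hH hnadj he
          rw [← hrs]
          have hx0r : (G.deleteEdges {s(r, s)}).Reachable r x0 := by
            by_contra hx0r
            have hne' : s(x0, y0) ≠ s(r, s) := fun hh => hgF (by rw [hh, hrs]; exact he)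
            have hW : ∀ u, (G.deleteEdges {s(r, s)}).Reachable r u →
                (G.deleteEdges {s(x0, y0)}).Reachable r u := by
              intro u hu
              exact reach_avoid hu hx0r
            have hc1 : (G.deleteEdges {s(x0, y0)}).Reachable r (φ z1) := hW _ (hcovr z1)
            have hc2 : (G.deleteEdges {s(x0, y0)}).Reachable r (φ z2) := hW _ (hcovr z2)
            have hz1y : (G.deleteEdges {s(x0, y0)}).Reachable y0 (φ z1) :=
              (side_total hG (φ z1)).resolve_left hz1
            have hz2x : (G.deleteEdges {s(x0, y0)}).Reachable x0 (φ z2) :=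
              (side_total hG (φ z2)).resolve_right hz2
            exact not_reach_of_isBridge hgbr
              ((hz2x.trans (hc2.symm.trans hc1)).trans hz1y.symm)
          exact (hx0r.symm.trans (hcovr z1)).mono G_delete_le_F_delete
        have hreachF : (superpose G H φ).Reachable x0 (φ z1) :=
          (hG.preconnected x0 (φ z1)).mono le_sup_left
        have hres := reachable_deleteEdges_bridges hreachF hall
        rw [ConnectedComponent.mem_supp_iff] at hx0C ⊢
        rw [← hx0C]
        exact ConnectedComponent.eq.mpr hres.symm
      have hDsub : ((bicompGraph G).connectedComponentMk a).supp ⊆ C.supp := by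
        intro u hu
        rw [mem_supp_mk_iff] at hu
        rw [ConnectedComponent.mem_supp_iff] at haC ⊢
        rw [← haC]
        exact ConnectedComponent.eq.mpr (hu.mono (bicompG_le_bicompF hG hnadj)).symm
      have hCsub : C.supp ⊆ ((bicompGraph G).connectedComponentMk a).supp := by
        intro u hu
        have hr : (bicompGraph (superpose G H φ)).Reachable a u := mem_supp_reach haC hu
        obtain ⟨p⟩ := hr
        refine closed_under_walk (s := ((bicompGraph G).connectedComponentMk a).supp) ?_ p
          (mem_supp_mk_iff.mpr (Reachable.refl a))
        intro x y hx hxy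
        rw [bicompGraph, deleteEdges_adj, Set.mem_setOf_eq] at hxy
        obtain ⟨hadjF, hnbr⟩ := hxy
        rcases hadjF with hGxy | hmap
        · by_cases hgb : G.IsBridge s(x, y)
          · exact (claimB x y (hDsub hx) hgb hnbr).elim
          · have hGadj : (bicompGraph G).Adj x y := by
              rw [bicompGraph, deleteEdges_adj]; exact ⟨hGxy, hgb⟩
            rw [ConnectedComponent.mem_supp_iff] at hx ⊢
            rw [← hx]
            exact ConnectedComponent.eq.mpr hGadj.symm.reachable
        · obtain ⟨-, x1, y1, hxy1, rfl, rfl⟩ := hmap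
          exact absurd ⟨x1, hDsub hx⟩ hcovC
      have hsuppDC : C.supp = ((bicompGraph G).connectedComponentMk a).supp :=
        Set.Subset.antisymm hCsub hDsub
      have hDpend : IsPendant G ((bicompGraph G).connectedComponentMk a) := by
        refine ⟨s(a, b), ⟨hGab, a, mem_supp_mk_iff.mpr (Reachable.refl a),
          Sym2.mem_mk_left a b⟩, ?_⟩
        rintro e' ⟨hbre', x0, hx0, hx0e⟩
        obtain ⟨y0, rfl⟩ := Sym2.mem_iff_exists.mp hx0e
        by_cases hFe' : (superpose G H φ).IsBridge s(x0, y0)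
        · exact huniqF _ hFe' ⟨x0, hDsub hx0, Sym2.mem_mk_left x0 y0⟩
        · exact (claimB x0 y0 (hDsub hx0) hbre' hFe').elim
      obtain ⟨k, hPk⟩ := hPall _ hDpend
      refine ⟨k, ?_, ?_⟩
      · intro hkA
        obtain ⟨x, hx⟩ := (hcov_mem k).mpr hkA
        refine hcovC ⟨x, ?_⟩
        rw [hx]
        have hvk : v k ∈ ((bicompGraph G).connectedComponentMk a).supp := hPk ▸ hv k
        exact hDsub hvk
      · rw [hPk, ← hsuppDC]
  ext S
  simp only [Set.mem_setOf_eq]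
  constructor
  · rintro ⟨C, hCpend, rfl⟩
    obtain ⟨k, hk, hsupp⟩ := hLHS C hCpend
    exact ⟨k, fun hr => hk ((hcov_mem k).mp hr), hsupp⟩
  · rintro ⟨k, hk, rfl⟩
    have hkA : k ∉ A := fun h => hk ((hcov_mem k).mpr h)
    exact ⟨_, (hRHS k hkA).1, (hRHS k hkA).2⟩
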